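/- Let Γ₁ and Γ₂ be nonempty closed cones in ℝⁿ\{0} such that 0 ∉ Γ₁ + Γ₂. Then the closure of Γ₁ + Γ₂ taken in the subspace ℝⁿ\{0} equals (Γ₁ + Γ₂) ∪ Γ₁ ∪ Γ₂. -/
import Mathlib


open Pointwise Filter Topology

/--
Let `Γ₁`, `Γ₂` be nonempty closed cones in `ℝⁿ \ {0}` (subsets of
`ℝⁿ \ {0}` stable under positive scalar multiplication and closed in the subspace
topology of `ℝⁿ \ {0}`) such that `0 ∉ Γ₁ + Γ₂`. Then the closure of `Γ₁ + Γ₂` taken in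
the subspace `ℝⁿ \ {0}` equals `(Γ₁ + Γ₂) ∪ Γ₁ ∪ Γ₂`.
-/
theorem stmt1 (n : ℕ) (Γ₁ Γ₂ : Set (EuclideanSpace ℝ (Fin n)))
    (h₁ne : Γ₁.Nonempty) (h₂ne : Γ₂.Nonempty)
    (h₁0 : (0 : EuclideanSpace ℝ (Fin n)) ∉ Γ₁)
    (h₂0 : (0 : EuclideanSpace ℝ (Fin n)) ∉ Γ₂)
    (h₁cone : ∀ ξ ∈ Γ₁, ∀ t : ℝ, 0 < t → t • ξ ∈ Γ₁)
    (h₂cone : ∀ ξ ∈ Γ₂, ∀ t : ℝ, 0 < t → t • ξ ∈ Γ₂)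
    (h₁closed : closure Γ₁ \ {0} ⊆ Γ₁)
    (h₂closed : closure Γ₂ \ {0} ⊆ Γ₂)
    (hsum : (0 : EuclideanSpace ℝ (Fin n)) ∉ Γ₁ + Γ₂) :
    closure (Γ₁ + Γ₂) \ {0} = (Γ₁ + Γ₂) ∪ Γ₁ ∪ Γ₂ := by
  apply Set.Subset.antisymm
  · rintro x ⟨hx, hx0⟩
    simp only [Set.mem_singleton_iff] at hx0
    obtain ⟨u, hu, hulim⟩ := mem_closure_iff_seq_limit.mp hx
    choose ξ hξ η hη hsum' using fun k => Set.mem_add.mp (hu k)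
    set t : ℕ → ℝ := fun k => (1 + ‖ξ k‖ + ‖η k‖)⁻¹ with ht
    have hden : ∀ k, (0:ℝ) < 1 + ‖ξ k‖ + ‖η k‖ := by intro k; positivity
    have ht0 : ∀ k, 0 < t k := fun k => inv_pos.mpr (hden k)
    have heq : ∀ k, t k * (1 + ‖ξ k‖ + ‖η k‖) = 1 := fun k =>
      inv_mul_cancel₀ (hden k).ne'
    have htle : ∀ k, t k ≤ 1 := by
      intro k
      have : (1:ℝ) ≤ 1 + ‖ξ k‖ + ‖η k‖ := by
        linarith [norm_nonneg (ξ k), norm_nonneg (η k)]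
      calc t k = (1 + ‖ξ k‖ + ‖η k‖)⁻¹ := rfl
        _ ≤ 1 := inv_le_one_of_one_le₀ this
    have hnormsum : ∀ k, t k + ‖t k • ξ k‖ + ‖t k • η k‖ = 1 := by
      intro k
      rw [norm_smul, norm_smul, Real.norm_of_nonneg (ht0 k).le]
      have := heq k
      ring_nf
      ring_nf at this
      linarith
    set v : ℕ → ℝ × EuclideanSpace ℝ (Fin n) × EuclideanSpace ℝ (Fin n) := fun k => (t k, t k • ξ k, t k • η k) with hv
    have hvball : ∀ k, v k ∈ Metric.closedBall (0 : ℝ × EuclideanSpace ℝ (Fin n) × EuclideanSpace ℝ (Fin n)) 1 := by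
      intro k
      rw [Metric.mem_closedBall, dist_zero_right, Prod.norm_def, Prod.norm_def]
      have h1 : ‖t k‖ ≤ 1 := by
        rw [Real.norm_of_nonneg (ht0 k).le]; exact htle k
      have h2 : ‖t k • ξ k‖ ≤ 1 := by nlinarith [hnormsum k, (ht0 k).le, norm_nonneg (t k • η k)]
      have h3 : ‖t k • η k‖ ≤ 1 := by nlinarith [hnormsum k, (ht0 k).le, norm_nonneg (t k • ξ k)]
      exact max_le h1 (max_le h2 h3)
    obtain ⟨⟨t₀, ξ₀, η₀⟩, -, φ, hφ, hlim⟩ :=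
      (isCompact_closedBall (0 : ℝ × EuclideanSpace ℝ (Fin n) × EuclideanSpace ℝ (Fin n)) 1).tendsto_subseq hvball
    have hlt : Tendsto (fun k => t (φ k)) atTop (𝓝 t₀) :=
      (continuous_fst.tendsto _).comp hlim
    have hlξ : Tendsto (fun k => t (φ k) • ξ (φ k)) atTop (𝓝 ξ₀) :=
      ((continuous_fst.comp continuous_snd).tendsto _).comp hlim
    have hlη : Tendsto (fun k => t (φ k) • η (φ k)) atTop (𝓝 η₀) :=
      ((continuous_snd.comp continuous_snd).tendsto _).comp hlim
    have ht₀nonneg : 0 ≤ t₀ := ge_of_tendsto' hlt (fun k => (ht0 (φ k)).le)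
    -- limit equation: ξ₀ + η₀ = t₀ • x
    have hxeq : ξ₀ + η₀ = t₀ • x := by
      have h1 : Tendsto (fun k => t (φ k) • ξ (φ k) + t (φ k) • η (φ k)) atTop (𝓝 (ξ₀ + η₀)) :=
        hlξ.add hlη
      have h2 : Tendsto (fun k => t (φ k) • u (φ k)) atTop (𝓝 (t₀ • x)) :=
        hlt.smul (hulim.comp hφ.tendsto_atTop)
      have h3 : (fun k => t (φ k) • ξ (φ k) + t (φ k) • η (φ k)) =
          fun k => t (φ k) • u (φ k) := by
        funext k; rw [← smul_add, hsum']
      rw [h3] at h1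
      exact tendsto_nhds_unique h1 h2
    -- norm equation
    have hnorm₀ : t₀ + ‖ξ₀‖ + ‖η₀‖ = 1 := by
      have h1 : Tendsto (fun k => t (φ k) + ‖t (φ k) • ξ (φ k)‖ + ‖t (φ k) • η (φ k)‖)
          atTop (𝓝 (t₀ + ‖ξ₀‖ + ‖η₀‖)) := (hlt.add hlξ.norm).add hlη.norm
      have h2 : (fun k => t (φ k) + ‖t (φ k) • ξ (φ k)‖ + ‖t (φ k) • η (φ k)‖) =
          fun _ => (1:ℝ) := funext fun k => hnormsum (φ k)
      rw [h2] at h1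
      exact tendsto_nhds_unique h1 tendsto_const_nhds
    have mem₁ : ξ₀ ≠ 0 → ξ₀ ∈ Γ₁ := fun h =>
      h₁closed ⟨mem_closure_of_tendsto hlξ
        (Filter.Eventually.of_forall fun k => h₁cone _ (hξ (φ k)) _ (ht0 (φ k))), h⟩
    have mem₂ : η₀ ≠ 0 → η₀ ∈ Γ₂ := fun h =>
      h₂closed ⟨mem_closure_of_tendsto hlη
        (Filter.Eventually.of_forall fun k => h₂cone _ (hη (φ k)) _ (ht0 (φ k))), h⟩
    rcases eq_or_lt_of_le ht₀nonneg with ht₀ | ht₀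
    · -- t₀ = 0 : contradiction
      exfalso
      rw [← ht₀, zero_smul] at hxeq
      by_cases hξ0 : ξ₀ = 0
      · rw [hξ0, zero_add] at hxeq
        rw [hξ0, hxeq] at hnorm₀
        simp [← ht₀] at hnorm₀
      · have hη0 : η₀ ≠ 0 := by
          intro h
          rw [h, add_zero] at hxeq
          exact hξ0 hxeq
        exact hsum (hxeq ▸ Set.add_mem_add (mem₁ hξ0) (mem₂ hη0))
    · -- t₀ > 0
      have hx' : x = t₀⁻¹ • ξ₀ + t₀⁻¹ • η₀ := by
        rw [← smul_add, hxeq, smul_smul, inv_mul_cancel₀ ht₀.ne', one_smul]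
      by_cases hξ0 : ξ₀ = 0
      · have hη0 : η₀ ≠ 0 := by
          intro h
          rw [hξ0, h, add_zero] at hxeq
          exact hx0 (by simpa [smul_eq_zero, ht₀.ne'] using hxeq.symm)
        right
        rw [hx', hξ0, smul_zero, zero_add]
        exact h₂cone _ (mem₂ hη0) _ (inv_pos.mpr ht₀)
      · by_cases hη0 : η₀ = 0
        · left; right
          rw [hx', hη0, smul_zero, add_zero]
          exact h₁cone _ (mem₁ hξ0) _ (inv_pos.mpr ht₀)
        · left; left
          rw [hx']
          exact Set.add_mem_add (h₁cone _ (mem₁ hξ0) _ (inv_pos.mpr ht₀))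
            (h₂cone _ (mem₂ hη0) _ (inv_pos.mpr ht₀))
  · -- reverse inclusion
    have haux : ∀ (Γ Γ' : Set (EuclideanSpace ℝ (Fin n))), (∀ ξ ∈ Γ', ∀ t : ℝ, 0 < t → t • ξ ∈ Γ') → Γ'.Nonempty →
        Γ ⊆ closure (Γ + Γ') := by
      rintro Γ Γ' hcone ⟨η₀, hη₀⟩ ξ hξ
      refine mem_closure_of_tendsto (b := (atTop : Filter ℕ)) (f := fun k : ℕ => ξ + (1 / ((k:ℝ) + 1)) • η₀) ?_ ?_
      · have : Tendsto (fun k : ℕ => (1 / ((k:ℝ) + 1)) • η₀) atTop (𝓝 ((0:ℝ) • η₀)) :=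
          tendsto_one_div_add_atTop_nhds_zero_nat.smul_const η₀
        rw [zero_smul] at this
        simpa using (tendsto_const_nhds.add this)
      · exact Filter.Eventually.of_forall fun k =>
          Set.add_mem_add hξ (hcone _ hη₀ _ (by positivity))
    rintro x ((h | h) | h)
    · refine ⟨subset_closure h, ?_⟩
      simp only [Set.mem_singleton_iff]
      rintro rfl; exact hsum h
    · refine ⟨haux Γ₁ Γ₂ h₂cone h₂ne h, ?_⟩
      simp only [Set.mem_singleton_iff]
      rintro rfl; exact h₁0 h
    · refine ⟨?_, ?_⟩
      · have := haux Γ₂ Γ₁ h₁cone h₁ne h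
        rwa [add_comm Γ₂ Γ₁] at this
      · simp only [Set.mem_singleton_iff]
        rintro rfl; exact h₂0 h
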